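/- (Exact conic relaxation) Let m be even and let f_0,...,f_p be polynomials of degree m on ℝ^n with essentially nonpositive coefficients, with nonempty feasible set {x : f_l(x) ≤ 0, l = 1,...,p}. Let F̃_l be the symmetric tensor of the canonical homogenization f̃_l on ℝ^{n+1}. Then min{f_0(x) : f_l(x) ≤ 0, l=1,...,p} = min{⟨F̃_0, X⟩ : ⟨F̃_l, X⟩ ≤ 0 (l=1,...,p), X_{n+1,...,n+1} = 1, X ∈ U_{m,n+1}}. Moreover, if X̄ solves the conic problem, then x̄ = ((X̄_{1...1})^{1/m},...,(X̄_{n...n})^{1/m}) solves the polynomial problem. -/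

import Mathlib

open Finset MvPolynomial

noncomputable section

/-- Entrywise inner product of two m-th order n-dimensional tensors. -/
def tIP {m n : ℕ} (A B : (Fin m → Fin n) → ℝ) : ℝ :=
  ∑ i : Fin m → Fin n, A i * B i

/-- The rank-one tensor `x^{⊗m}` with entries `x_{i_1} ⋯ x_{i_m}`. -/
def rk1 {n : ℕ} (m : ℕ) (x : Fin n → ℝ) : (Fin m → Fin n) → ℝ :=
  fun i => ∏ k, x (i k)

/-- A tensor is symmetric if invariant under permutations of its indices. -/
def TSymm {m n : ℕ} (A : (Fin m → Fin n) → ℝ) : Prop :=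
  ∀ (σ : Equiv.Perm (Fin m)) (i : Fin m → Fin n), A (i ∘ σ) = A i

/-- Essentially nonpositive: entries with indices not all equal are ≤ 0. -/
def EssNonpos {m n : ℕ} (A : (Fin m → Fin n) → ℝ) : Prop :=
  ∀ i : Fin m → Fin n, (¬ ∀ k l, i k = i l) → A i ≤ 0

/-- `U_{m,n}`: convex hull of the rank-one tensors `x^{⊗m}`. -/
def Ucone (m n : ℕ) : Set ((Fin m → Fin n) → ℝ) :=
  convexHull ℝ {X | ∃ x : Fin n → ℝ, X = rk1 m x}

/-- The tensor `P^m A`. -/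
def pmul {m n : ℕ} (P : Matrix (Fin n) (Fin n) ℝ) (A : (Fin m → Fin n) → ℝ) :
    (Fin m → Fin n) → ℝ :=
  fun i => ∑ j : Fin m → Fin n, (∏ k, P (i k) (j k)) * A j

/-- A real-valued function on ℝⁿ is a sum of squares of polynomials. -/
def IsSOSFun {n : ℕ} (f : (Fin n → ℝ) → ℝ) : Prop :=
  ∃ (r : ℕ) (g : Fin r → MvPolynomial (Fin n) ℝ),
    ∀ x, f x = ∑ j, (MvPolynomial.eval x (g j)) ^ 2

/-- A polynomial is a sum of squares of polynomials. -/
def IsSOSPoly {n : ℕ} (f : MvPolynomial (Fin n) ℝ) : Prop :=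
  ∃ (r : ℕ) (g : Fin r → MvPolynomial (Fin n) ℝ), f = ∑ j, (g j) ^ 2

/-- A polynomial has essentially nonpositive coefficients (w.r.t. degree m):
    every coefficient except the constant term and those of `x_i^m` is ≤ 0. -/
def EssNonposCoeff {n : ℕ} (m : ℕ) (f : MvPolynomial (Fin n) ℝ) : Prop :=
  ∀ α : Fin n →₀ ℕ, α ≠ 0 → (∀ i, α ≠ Finsupp.single i m) → f.coeff α ≤ 0


lemma sum_wfrac {m N : ℕ} (hm0 : 0 < m) (β : Fin N → ℕ) (hβ : ∑ i, β i = m) :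
    ∑ i, ((β i : ℝ)/m) = 1 := by
  rw [← Finset.sum_div]
  rw [show ∑ i, ((β i : ℝ)) = (m:ℝ) by exact_mod_cast congrArg Nat.cast hβ]
  field_simp

lemma holder_key {m : ℕ} (hm0 : 0 < m) (hm : Even m) {ι : Type} (t : Finset ι)
    (w : ι → ℝ) (hw : ∀ j ∈ t, 0 ≤ w j)
    {N : ℕ} (y : ι → Fin N → ℝ) (β : Fin N → ℕ) (hβ : ∑ i, β i = m)
    (z : Fin N → ℝ) (hz : ∀ i, 0 ≤ z i)
    (hzm : ∀ i, z i ^ m = ∑ j ∈ t, w j * (y j i) ^ m) :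
    ∑ j ∈ t, w j * ∏ i, (y j i) ^ β i ≤ ∏ i, (z i) ^ β i := by
  have habs : ∀ a : ℝ, a ^ m = |a| ^ m := fun a => (hm.pow_abs a).symm
  by_cases hdeg : ∃ i, β i ≠ 0 ∧ z i = 0
  · obtain ⟨i0, hb0, hz0⟩ := hdeg
    have hzero : ∀ j ∈ t, w j * (y j i0) ^ m = 0 := by
      intro j hj
      have hsum : ∑ j ∈ t, w j * (y j i0) ^ m = 0 := by rw [← hzm i0, hz0, zero_pow hm0.ne']
      have hnn : ∀ j ∈ t, 0 ≤ w j * (y j i0) ^ m := fun j hj =>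
        mul_nonneg (hw j hj) (hm.pow_nonneg _)
      exact (Finset.sum_eq_zero_iff_of_nonneg hnn).1 hsum j hj
    have hL : ∑ j ∈ t, w j * ∏ i, (y j i) ^ β i = 0 := by
      apply Finset.sum_eq_zero
      intro j hj
      rcases mul_eq_zero.1 (hzero j hj) with h | h
      · rw [h, zero_mul]
      · have : y j i0 = 0 := pow_eq_zero_iff hm0.ne' |>.1 h
        rw [Finset.prod_eq_zero (Finset.mem_univ i0) (by rw [this, zero_pow hb0]), mul_zero]
    rw [hL, Finset.prod_eq_zero (Finset.mem_univ i0) (by rw [hz0, zero_pow hb0])]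
  · push_neg at hdeg
    have hzpos : ∀ i, β i ≠ 0 → 0 < z i := fun i hi => (hz i).lt_of_ne (fun h => hdeg i hi h.symm)
    set P := ∏ i, (z i) ^ β i with hP
    have hPpos : 0 < P := by
      apply Finset.prod_pos
      intro i _
      by_cases hb : β i = 0
      · simp [hb]
      · exact pow_pos (hzpos i hb) _
    have step1 : ∑ j ∈ t, w j * ∏ i, (y j i) ^ β i ≤
        ∑ j ∈ t, w j * ∏ i, |y j i| ^ β i := by
      apply Finset.sum_le_sum
      intro j hj
      apply mul_le_mul_of_nonneg_left _ (hw j hj)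
      calc ∏ i, (y j i) ^ β i ≤ |∏ i, (y j i) ^ β i| := le_abs_self _
        _ = ∏ i, |y j i| ^ β i := by simp [Finset.abs_prod, abs_pow]
    have step2 : ∀ j ∈ t, ∏ i, |y j i| ^ β i ≤
        P * ∑ i, ((β i : ℝ)/m) * (|y j i| ^ m / z i ^ m) := by
      intro j hj
      have amgm := Real.geom_mean_le_arith_mean_weighted Finset.univ
        (fun i => (β i : ℝ)/m) (fun i => |y j i| ^ m / z i ^ m)
        (fun i _ => by positivity)
        (sum_wfrac hm0 β hβ)
        (fun i _ => div_nonneg (pow_nonneg (abs_nonneg _) _) (pow_nonneg (hz i) _))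
      have key : ∏ i, ((|y j i| ^ m / z i ^ m) ^ ((β i : ℝ)/m)) =
          (∏ i, |y j i| ^ β i) / P := by
        rw [hP, ← Finset.prod_div_distrib]
        apply Finset.prod_congr rfl
        intro i _
        by_cases hb : β i = 0
        · simp [hb]
        · have hzi := hzpos i hb
          rw [Real.div_rpow (by positivity) (by positivity)]
          rw [← Real.rpow_natCast |y j i| m, ← Real.rpow_natCast (z i) m,
            ← Real.rpow_mul (abs_nonneg _), ← Real.rpow_mul (le_of_lt hzi)]
          have hc : (m:ℝ) * ((β i : ℝ)/m) = (β i : ℝ) := by field_simp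
          rw [hc, Real.rpow_natCast, Real.rpow_natCast]
      rw [key] at amgm
      calc ∏ i, |y j i| ^ β i = P * ((∏ i, |y j i| ^ β i) / P) := by
            rw [mul_div_cancel₀ _ hPpos.ne']
        _ ≤ P * ∑ i, ((β i : ℝ)/m) * (|y j i| ^ m / z i ^ m) :=
            mul_le_mul_of_nonneg_left amgm hPpos.le
    have hsum_i : ∀ i, (∑ j ∈ t, w j * (|y j i| ^ m / z i ^ m)) = z i ^ m / z i ^ m := by
      intro i
      simp only [← mul_div_assoc]
      rw [← Finset.sum_div]
      congr 1
      rw [hzm i]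
      exact Finset.sum_congr rfl fun j _ => by rw [← habs]
    calc ∑ j ∈ t, w j * ∏ i, (y j i) ^ β i
        ≤ ∑ j ∈ t, w j * ∏ i, |y j i| ^ β i := step1
      _ ≤ ∑ j ∈ t, w j * (P * ∑ i, ((β i : ℝ)/m) * (|y j i| ^ m / z i ^ m)) :=
          Finset.sum_le_sum fun j hj => mul_le_mul_of_nonneg_left (step2 j hj) (hw j hj)
      _ = P * ∑ i, ((β i : ℝ)/m) * ∑ j ∈ t, w j * (|y j i| ^ m / z i ^ m) := by
          simp only [Finset.mul_sum]
          rw [Finset.sum_comm]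
          exact Finset.sum_congr rfl fun i _ => Finset.sum_congr rfl fun j _ => by ring
      _ = P * ∑ i, ((β i : ℝ)/m) := by
          congr 1
          apply Finset.sum_congr rfl
          intro i _
          rw [hsum_i i]
          by_cases hb : β i = 0
          · simp [hb]
          · rw [div_self (pow_ne_zero _ (hzpos i hb).ne'), mul_one]
      _ = P := by rw [sum_wfrac hm0 β hβ, mul_one]

lemma key2 {n m : ℕ} (hm : Even m) (hm0 : 0 < m) (f : MvPolynomial (Fin n) ℝ)
    (hdeg : f.totalDegree ≤ m) (hcoeff : EssNonposCoeff m f)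
    {ι : Type} (t : Finset ι) (w : ι → ℝ) (y : ι → Fin (n+1) → ℝ)
    (hw0 : ∀ j ∈ t, 0 ≤ w j) (hw1 : ∑ j ∈ t, w j = 1)
    (hlast : ∑ j ∈ t, w j * (y j (Fin.last n))^m = 1)
    (x : Fin n → ℝ)
    (hx : ∀ i : Fin n, x i = (∑ j ∈ t, w j * (y j i.castSucc)^m) ^ ((1:ℝ)/m)) :
    ∑ α ∈ f.support, f.coeff α * ∏ i, x i ^ α i ≤
      ∑ j ∈ t, w j * ∑ α ∈ f.support,
        f.coeff α * (∏ i, (y j i.castSucc) ^ α i) * (y j (Fin.last n)) ^ (m - ∑ i, α i) := by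
  have hmne : (m:ℝ) ≠ 0 := Nat.cast_ne_zero.2 hm0.ne'
  -- basics about x
  have hbase : ∀ i : Fin n, 0 ≤ ∑ j ∈ t, w j * (y j i.castSucc)^m := fun i =>
    Finset.sum_nonneg fun j hj => mul_nonneg (hw0 j hj) (hm.pow_nonneg _)
  have hxnn : ∀ i, 0 ≤ x i := fun i => by rw [hx i]; exact Real.rpow_nonneg (hbase i) _
  have hxm : ∀ i : Fin n, x i ^ m = ∑ j ∈ t, w j * (y j i.castSucc)^m := by
    intro i
    rw [hx i, ← Real.rpow_natCast (_ ^ ((1:ℝ)/m)) m, ← Real.rpow_mul (hbase i),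
      one_div_mul_cancel hmne, Real.rpow_one]
  -- swap sums on the RHS
  rw [show ∑ j ∈ t, w j * ∑ α ∈ f.support,
        f.coeff α * (∏ i, (y j i.castSucc) ^ α i) * (y j (Fin.last n)) ^ (m - ∑ i, α i)
      = ∑ α ∈ f.support, f.coeff α * ∑ j ∈ t,
          w j * ((∏ i, (y j i.castSucc) ^ α i) * (y j (Fin.last n)) ^ (m - ∑ i, α i)) by
    simp only [Finset.mul_sum]
    rw [Finset.sum_comm]
    exact Finset.sum_congr rfl fun α _ => Finset.sum_congr rfl fun j _ => by ring]
  apply Finset.sum_le_sum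
  intro α hα
  set k := ∑ i, α i with hk
  have hkm : k ≤ m := by
    refine le_trans ?_ hdeg
    have := MvPolynomial.le_totalDegree hα
    rwa [show (α.sum fun _ e => e) = k by
      rw [Finsupp.sum_fintype]; exact fun _ => rfl] at this
  -- the exponent vector β and the vector z
  set β : Fin (n+1) → ℕ := Fin.snoc (fun i => α i) (m - k) with hβdef
  have hβ : ∑ i, β i = m := by
    rw [Fin.sum_univ_castSucc]
    simp only [hβdef, Fin.snoc_castSucc, Fin.snoc_last]
    omega
  set z : Fin (n+1) → ℝ := Fin.snoc x 1 with hzdef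
  have hz : ∀ i, 0 ≤ z i := by
    intro i
    induction i using Fin.lastCases with
    | last => simp [hzdef]
    | cast i => simpa [hzdef] using hxnn i
  have hzm : ∀ i, z i ^ m = ∑ j ∈ t, w j * (y j i) ^ m := by
    intro i
    induction i using Fin.lastCases with
    | last => simpa [hzdef] using hlast.symm
    | cast i => simpa [hzdef] using hxm i
  have hold := holder_key hm0 hm t w hw0 y β hβ z hz hzm
  -- rewrite products over Fin (n+1)
  have hprodz : ∏ i, z i ^ β i = ∏ i, x i ^ α i := by
    rw [Fin.prod_univ_castSucc]
    simp [hzdef, hβdef]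
  have hprody : ∀ j, ∏ i, (y j i) ^ β i
      = (∏ i, (y j i.castSucc) ^ α i) * (y j (Fin.last n)) ^ (m - k) := by
    intro j
    rw [Fin.prod_univ_castSucc]
    simp [hβdef]
  rw [hprodz] at hold
  simp_rw [hprody] at hold
  by_cases h0 : α = 0
  · apply le_of_eq
    have hk0 : k = 0 := by simp [hk, h0]
    have h1 : ∑ j ∈ t, w j * ((∏ i, (y j i.castSucc) ^ α i) *
        (y j (Fin.last n)) ^ (m - k)) = 1 := by
      rw [hk0]
      simp only [h0, Finsupp.coe_zero, Pi.zero_apply, pow_zero, Finset.prod_const_one,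
        one_mul, Nat.sub_zero]
      exact hlast
    rw [h1, show (∏ i, x i ^ α i) = 1 by simp [h0]]
  by_cases hsingle : ∃ i0, α = Finsupp.single i0 m
  · obtain ⟨i0, rfl⟩ := hsingle
    have hkm' : k = m := by
      rw [hk]
      simp [Finsupp.single_apply]
    have hprodx : ∏ i, x i ^ (Finsupp.single i0 m) i = x i0 ^ m := by
      rw [Finset.prod_eq_single i0]
      · simp
      · intro b _ hb
        rw [Finsupp.single_apply, if_neg (fun h => hb h.symm), pow_zero]
      · intro h; exact absurd (Finset.mem_univ i0) h
    have hprody2 : ∀ j, ∏ i, (y j i.castSucc) ^ (Finsupp.single i0 m) i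
        = (y j i0.castSucc) ^ m := by
      intro j
      rw [Finset.prod_eq_single i0]
      · simp
      · intro b _ hb
        rw [Finsupp.single_apply, if_neg (fun h => hb h.symm), pow_zero]
      · intro h; exact absurd (Finset.mem_univ i0) h
    apply le_of_eq
    rw [hprodx, hxm i0, show m - k = 0 by omega, Finset.mul_sum, Finset.mul_sum]
    refine Finset.sum_congr rfl fun j _ => ?_
    rw [hprody2 j, pow_zero]
    ring
  · have hc : f.coeff α ≤ 0 := hcoeff α h0 (fun i h => hsingle ⟨i, h⟩)
    exact mul_le_mul_of_nonpos_left hold hc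

lemma tIP_smul_sum {m N : ℕ} (F : (Fin m → Fin N) → ℝ) {ι : Type} (t : Finset ι)
    (w : ι → ℝ) (Z : ι → (Fin m → Fin N) → ℝ) :
    tIP F (∑ j ∈ t, w j • Z j) = ∑ j ∈ t, w j * tIP F (Z j) := by
  unfold tIP
  simp only [Finset.sum_apply, Pi.smul_apply, smul_eq_mul, Finset.mul_sum]
  rw [Finset.sum_comm]
  exact Finset.sum_congr rfl fun j _ => Finset.sum_congr rfl fun i _ => by ring

lemma sInf_eq_aux (S₁ S₂ : Set ℝ) (hne : S₁.Nonempty) (h12 : S₁ ⊆ S₂)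
    (h21 : ∀ v ∈ S₂, ∃ v' ∈ S₁, v' ≤ v) : sInf S₁ = sInf S₂ := by
  by_cases hb : BddBelow S₁
  · apply le_antisymm
    · apply le_csInf (hne.mono h12)
      intro v hv
      obtain ⟨v', hv', hle⟩ := h21 v hv
      exact (csInf_le hb hv').trans hle
    · refine csInf_le_csInf ?_ hne h12
      obtain ⟨b, hb'⟩ := hb
      exact ⟨b, fun v hv => by
        obtain ⟨v', hv', hle⟩ := h21 v hv; exact (hb' hv').trans hle⟩
  · have hb2 : ¬ BddBelow S₂ := fun ⟨b, hb2⟩ => hb ⟨b, fun v hv => hb2 (h12 hv)⟩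
    rw [csInf_of_not_bddBelow hb, csInf_of_not_bddBelow hb2]

lemma bridge {n m : ℕ} (hm : Even m) (hm0 : 0 < m) (f : MvPolynomial (Fin n) ℝ)
    (hdeg : f.totalDegree ≤ m) (hcoeff : EssNonposCoeff m f)
    (F : (Fin m → Fin (n+1)) → ℝ)
    (hrepF : ∀ (x : Fin n → ℝ) (t : ℝ), tIP F (rk1 m (Fin.snoc x t)) =
      ∑ α ∈ f.support, f.coeff α * (∏ i, x i ^ α i) * t ^ (m - ∑ i, α i))
    (X : (Fin m → Fin (n+1)) → ℝ) (hX : X ∈ Ucone m (n+1))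
    (hX1 : X (fun _ => Fin.last n) = 1) :
    MvPolynomial.eval (fun i : Fin n => (X (fun _ => i.castSucc)) ^ ((1:ℝ)/m)) f ≤ tIP F X := by
  rw [Ucone, _root_.convexHull_eq] at hX
  obtain ⟨ι, t, w, Z, hw0, hw1, hZ, hXeq⟩ := hX
  rw [Finset.centerMass_eq_of_sum_1 _ _ hw1] at hXeq
  choose! y hy using hZ
  have hXs : X = ∑ j ∈ t, w j • rk1 m (y j) := by
    rw [← hXeq]
    exact Finset.sum_congr rfl fun j hj => by rw [hy j hj]
  have hentry : ∀ c : Fin (n+1), X (fun _ => c) = ∑ j ∈ t, w j * (y j c)^m := by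
    intro c
    rw [hXs]
    simp only [Finset.sum_apply, Pi.smul_apply, smul_eq_mul]
    refine Finset.sum_congr rfl fun j _ => ?_
    unfold rk1
    rw [Finset.prod_const, Finset.card_univ, Fintype.card_fin]
  have htIP : tIP F X = ∑ j ∈ t, w j * ∑ α ∈ f.support,
      f.coeff α * (∏ i, (y j i.castSucc) ^ α i) * (y j (Fin.last n)) ^ (m - ∑ i, α i) := by
    rw [hXs, tIP_smul_sum]
    refine Finset.sum_congr rfl fun j _ => ?_
    congr 1
    have hsnoc : Fin.snoc (fun i : Fin n => y j i.castSucc) (y j (Fin.last n)) = y j := by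
      funext i
      induction i using Fin.lastCases with
      | last => simp
      | cast i => simp
    rw [show rk1 m (y j) = rk1 m (Fin.snoc (fun i : Fin n => y j i.castSucc)
      (y j (Fin.last n))) from by rw [hsnoc], hrepF]
  rw [MvPolynomial.eval_eq', htIP]
  exact key2 hm hm0 f hdeg hcoeff t w y hw0 hw1
    (by rw [← hentry]; exact hX1) _ (fun i => by rw [hentry])

/-- Exact conic relaxation for polynomial optimization with essentially
nonpositive coefficients. -/
theorem stmt15 (n m p : ℕ) (hm : Even m) (hm0 : 0 < m)
    (f : Fin (p + 1) → MvPolynomial (Fin n) ℝ)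
    (hdeg : ∀ l, (f l).totalDegree ≤ m)
    (hcoeff : ∀ l, EssNonposCoeff m (f l))
    (Ft : Fin (p + 1) → (Fin m → Fin (n + 1)) → ℝ)
    (hFs : ∀ l, TSymm (Ft l))
    (hrep : ∀ l (x : Fin n → ℝ) (t : ℝ),
      tIP (Ft l) (rk1 m (Fin.snoc x t)) =
        ∑ α ∈ (f l).support,
          (f l).coeff α * (∏ i : Fin n, x i ^ α i) * t ^ (m - ∑ i : Fin n, α i))
    (hfeas : ∃ x : Fin n → ℝ, ∀ l : Fin p, MvPolynomial.eval x (f l.succ) ≤ 0) :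
    sInf {y : ℝ | ∃ x : Fin n → ℝ,
        (∀ l : Fin p, MvPolynomial.eval x (f l.succ) ≤ 0) ∧ y = MvPolynomial.eval x (f 0)} =
      sInf {y : ℝ | ∃ X ∈ Ucone m (n + 1),
        (∀ l : Fin p, tIP (Ft l.succ) X ≤ 0) ∧ X (fun _ => Fin.last n) = 1 ∧
          y = tIP (Ft 0) X} ∧
    ∀ X ∈ Ucone m (n + 1),
      (∀ l : Fin p, tIP (Ft l.succ) X ≤ 0) → X (fun _ => Fin.last n) = 1 →
      (∀ X' ∈ Ucone m (n + 1), (∀ l : Fin p, tIP (Ft l.succ) X' ≤ 0) →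
        X' (fun _ => Fin.last n) = 1 → tIP (Ft 0) X ≤ tIP (Ft 0) X') →
      ((∀ l : Fin p, MvPolynomial.eval
          (fun i : Fin n => (X (fun _ => i.castSucc)) ^ ((1 : ℝ) / m)) (f l.succ) ≤ 0) ∧
        ∀ x : Fin n → ℝ, (∀ l : Fin p, MvPolynomial.eval x (f l.succ) ≤ 0) →
          MvPolynomial.eval
            (fun i : Fin n => (X (fun _ => i.castSucc)) ^ ((1 : ℝ) / m)) (f 0) ≤
            MvPolynomial.eval x (f 0)) := by
  have hmem1 : ∀ x : Fin n → ℝ, rk1 m (Fin.snoc x (1:ℝ)) ∈ Ucone m (n+1) :=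
    fun x => subset_convexHull ℝ _ ⟨_, rfl⟩
  have hent1 : ∀ x : Fin n → ℝ, rk1 m (Fin.snoc x (1:ℝ)) (fun _ => Fin.last n) = 1 := by
    intro x
    unfold rk1
    simp
  have hval : ∀ (l : Fin (p+1)) (x : Fin n → ℝ),
      tIP (Ft l) (rk1 m (Fin.snoc x (1:ℝ))) = MvPolynomial.eval x (f l) := by
    intro l x
    rw [hrep l x 1, MvPolynomial.eval_eq']
    exact Finset.sum_congr rfl fun α _ => by rw [one_pow, mul_one]
  have hbridge : ∀ (l : Fin (p+1)) X, X ∈ Ucone m (n+1) → X (fun _ => Fin.last n) = 1 →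
      MvPolynomial.eval (fun i : Fin n => (X (fun _ => i.castSucc)) ^ ((1:ℝ)/m)) (f l)
        ≤ tIP (Ft l) X :=
    fun l X hX hX1 => bridge hm hm0 (f l) (hdeg l) (hcoeff l) (Ft l) (hrep l) X hX hX1
  constructor
  · apply sInf_eq_aux
    · obtain ⟨x, hx⟩ := hfeas
      exact ⟨_, x, hx, rfl⟩
    · rintro v ⟨x, hxf, rfl⟩
      exact ⟨rk1 m (Fin.snoc x (1:ℝ)), hmem1 x,
        fun l => by rw [hval]; exact hxf l, hent1 x, (hval 0 x).symm⟩
    · rintro v ⟨X, hX, hXf, hX1, rfl⟩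
      exact ⟨_, ⟨_, fun l => (hbridge l.succ X hX hX1).trans (hXf l), rfl⟩,
        hbridge 0 X hX hX1⟩
  · intro X hX hXf hX1 hopt
    refine ⟨fun l => (hbridge l.succ X hX hX1).trans (hXf l), ?_⟩
    intro x hxf
    calc MvPolynomial.eval (fun i : Fin n => (X (fun _ => i.castSucc)) ^ ((1:ℝ)/m)) (f 0)
        ≤ tIP (Ft 0) X := hbridge 0 X hX hX1
      _ ≤ tIP (Ft 0) (rk1 m (Fin.snoc x (1:ℝ))) :=
          hopt _ (hmem1 x) (fun l => by rw [hval]; exact hxf l) (hent1 x)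
      _ = MvPolynomial.eval x (f 0) := hval 0 x
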